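/- Let q be a polynomial vector field on ℝ³ (a triple of real polynomials in x₁, x₂, x₃). If the formal curl of the vector field x × q vanishes identically, i.e., ∇ × (x × q) = 0 as a polynomial identity, then x × q = 0 identically. In other words, the curl operator restricted to the space {x × q : q a polynomial vector field} is injective. -/

import Mathlib

open MvPolynomial

noncomputable section

/-- The pointwise cross product `x × q` of the identity vector field `x = (x₁,x₂,x₃)`
with a polynomial vector field `q`. -/
def crossX (q : Fin 3 → MvPolynomial (Fin 3) ℝ) : Fin 3 → MvPolynomial (Fin 3) ℝ :=
  ![X 1 * q 2 - X 2 * q 1, X 2 * q 0 - X 0 * q 2, X 0 * q 1 - X 1 * q 0]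

/-- The formal curl `∇ × v = (∂₂v₃ − ∂₃v₂, ∂₃v₁ − ∂₁v₃, ∂₁v₂ − ∂₂v₁)` of a polynomial
vector field on `ℝ³`. -/
def pcurl (v : Fin 3 → MvPolynomial (Fin 3) ℝ) : Fin 3 → MvPolynomial (Fin 3) ℝ :=
  ![pderiv 1 (v 2) - pderiv 2 (v 1),
    pderiv 2 (v 0) - pderiv 0 (v 2),
    pderiv 0 (v 1) - pderiv 1 (v 0)]

lemma X_mul_pderiv_monomial (j : Fin 3) (u : Fin 3 →₀ ℕ) (a : ℝ) :
    X j * pderiv j (monomial u a) = (u j : ℝ) • monomial u a := by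
  rw [pderiv_monomial]
  by_cases hu : u j = 0
  · simp [hu]
  · rw [X, monomial_mul]
    have hsum : Finsupp.single j 1 + (u - Finsupp.single j 1) = u := by
      ext k
      by_cases hk : k = j
      · subst hk
        simp [Finsupp.single_apply]
        omega
      · simp [Finsupp.single_apply, Ne.symm hk, hk]
    rw [hsum, smul_monomial, smul_eq_mul]
    congr 1
    ring

lemma coeff_X_mul_pderiv (j : Fin 3) (p : MvPolynomial (Fin 3) ℝ) (m : Fin 3 →₀ ℕ) :
    coeff m (X j * pderiv j p) = (m j : ℝ) * coeff m p := by
  induction p using MvPolynomial.induction_on' with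
  | monomial u a =>
    rw [X_mul_pderiv_monomial, coeff_smul, coeff_monomial]
    split_ifs with hm
    · subst hm; simp [mul_comm]
    · simp
  | add p r hp hr => simp [mul_add, coeff_add, hp, hr, mul_add]

/-- If `E p + p = 0` where `E = ∑ xᵢ ∂ᵢ` is the Euler operator, then `p = 0`. -/
lemma eigenzero (p : MvPolynomial (Fin 3) ℝ)
    (h : (∑ j : Fin 3, X j * pderiv j p) + p = 0) : p = 0 := by
  ext m
  have h2 := congrArg (coeff m) h
  simp only [coeff_add, coeff_sum, coeff_zero, coeff_X_mul_pderiv, Fin.sum_univ_three] at h2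
  have key : ((m 0 : ℝ) + (m 1) + (m 2) + 1) * coeff m p = 0 := by linear_combination h2
  have hpos : (0:ℝ) < (m 0 : ℝ) + (m 1) + (m 2) + 1 := by positivity
  have := mul_eq_zero.mp key
  simp only [coeff_zero]
  rcases this with h' | h'
  · linarith
  · exact h'

/-- If the formal curl of `x × q` vanishes identically for a polynomial
vector field `q` on `ℝ³`, then `x × q = 0` identically: the curl operator is injective on
the space `{x × q : q polynomial vector field}`. -/
theorem curl_injective_on_crossX (q : Fin 3 → MvPolynomial (Fin 3) ℝ)
    (h : pcurl (crossX q) = 0) : crossX q = 0 := by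
  have h0 := congrFun h 0
  have h1 := congrFun h 1
  have h2 := congrFun h 2
  simp only [pcurl, crossX, Matrix.cons_val_zero, Matrix.cons_val_one, Matrix.head_cons,
    Matrix.cons_val_two, Matrix.tail_cons, Pi.zero_apply, map_sub, pderiv_mul,
    pderiv_X_self, pderiv_X_of_ne (by decide : (1:Fin 3) ≠ 0),
    pderiv_X_of_ne (by decide : (2:Fin 3) ≠ 0), pderiv_X_of_ne (by decide : (0:Fin 3) ≠ 1),
    pderiv_X_of_ne (by decide : (2:Fin 3) ≠ 1), pderiv_X_of_ne (by decide : (0:Fin 3) ≠ 2),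
    pderiv_X_of_ne (by decide : (1:Fin 3) ≠ 2)] at h0 h1 h2
  have e0 : crossX q 0 = 0 := by
    apply eigenzero
    simp only [crossX, Matrix.cons_val_zero, Matrix.cons_val_one, Matrix.head_cons,
      Matrix.cons_val_two, Matrix.tail_cons, Fin.sum_univ_three, map_sub, pderiv_mul,
      pderiv_X_self,
      pderiv_X_of_ne (by decide : (1:Fin 3) ≠ 0), pderiv_X_of_ne (by decide : (2:Fin 3) ≠ 0),
      pderiv_X_of_ne (by decide : (0:Fin 3) ≠ 1), pderiv_X_of_ne (by decide : (2:Fin 3) ≠ 1),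
      pderiv_X_of_ne (by decide : (0:Fin 3) ≠ 2), pderiv_X_of_ne (by decide : (1:Fin 3) ≠ 2)]
    linear_combination X 2 * h1 - X 1 * h2
  have e1 : crossX q 1 = 0 := by
    apply eigenzero
    simp only [crossX, Matrix.cons_val_zero, Matrix.cons_val_one, Matrix.head_cons,
      Matrix.cons_val_two, Matrix.tail_cons, Fin.sum_univ_three, map_sub, pderiv_mul,
      pderiv_X_self,
      pderiv_X_of_ne (by decide : (1:Fin 3) ≠ 0), pderiv_X_of_ne (by decide : (2:Fin 3) ≠ 0),
      pderiv_X_of_ne (by decide : (0:Fin 3) ≠ 1), pderiv_X_of_ne (by decide : (2:Fin 3) ≠ 1),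
      pderiv_X_of_ne (by decide : (0:Fin 3) ≠ 2), pderiv_X_of_ne (by decide : (1:Fin 3) ≠ 2)]
    linear_combination X 0 * h2 - X 2 * h0
  have e2 : crossX q 2 = 0 := by
    apply eigenzero
    simp only [crossX, Matrix.cons_val_zero, Matrix.cons_val_one, Matrix.head_cons,
      Matrix.cons_val_two, Matrix.tail_cons, Fin.sum_univ_three, map_sub, pderiv_mul,
      pderiv_X_self,
      pderiv_X_of_ne (by decide : (1:Fin 3) ≠ 0), pderiv_X_of_ne (by decide : (2:Fin 3) ≠ 0),
      pderiv_X_of_ne (by decide : (0:Fin 3) ≠ 1), pderiv_X_of_ne (by decide : (2:Fin 3) ≠ 1),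
      pderiv_X_of_ne (by decide : (0:Fin 3) ≠ 2), pderiv_X_of_ne (by decide : (1:Fin 3) ≠ 2)]
    linear_combination X 1 * h0 - X 0 * h1
  funext i
  fin_cases i
  · exact e0
  · exact e1
  · exact e2

end
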